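/- Let L be the operator on smooth functions of one real variable defined by (Lf)(ρ) = −f′(ρ)/sinh(ρ), and for t > 0 let F_t(ρ) = exp(−ρ²/(2t)). For every n ∈ ℕ and every t > 0, there exist constants C > 0 and R > 0 such that for all ρ ≥ R: |Lⁿ(F_t)(ρ) · (t·sinh(ρ)/ρ)ⁿ · exp(ρ²/(2t)) − 1| ≤ C/ρ. Equivalently, Lⁿ(F_t)(ρ) = (ρ/(t·sinh ρ))ⁿ · (1 + O(1/ρ)) · exp(−ρ²/(2t)) as ρ → +∞. -/

import Mathlib

open Real Filter

noncomputable section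
namespace IterSinhAux

abbrev Mon := ℝ × ℕ × ℕ

/-- monomial `(c,a,b) ↦ c * ρ^a * (cosh ρ / sinh ρ)^b` -/
def meval (m : Mon) (ρ : ℝ) : ℝ :=
  m.1 * ρ ^ m.2.1 * (Real.cosh ρ / Real.sinh ρ) ^ m.2.2

def eval (l : List Mon) (ρ : ℝ) : ℝ := (l.map (fun m => meval m ρ)).sum

/-- formal derivative of a monomial -/
def Dmon (m : Mon) : List Mon :=
  [(m.1 * m.2.1, m.2.1 - 1, m.2.2), (m.1 * m.2.2, m.2.1, m.2.2 - 1),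
   (-(m.1 * m.2.2), m.2.1, m.2.2 + 1)]

def D (l : List Mon) : List Mon := l.flatMap Dmon

/-- formal `q_{n+1} = (ρ/t) q_n - q_n' + n coth ρ · q_n` -/
def step (t : ℝ) (n : ℕ) (l : List Mon) : List Mon :=
  l.map (fun m => (m.1 / t, m.2.1 + 1, m.2.2))
  ++ (D l).map (fun m => (-m.1, m.2.1, m.2.2))
  ++ l.map (fun m => ((n : ℝ) * m.1, m.2.1, m.2.2 + 1))

def q (t : ℝ) : ℕ → List Mon
  | 0 => [(1, 0, 0)]
  | n + 1 => step t n (q t n)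

@[simp] lemma eval_nil (ρ : ℝ) : eval [] ρ = 0 := rfl

@[simp] lemma eval_cons (m : Mon) (l : List Mon) (ρ : ℝ) :
    eval (m :: l) ρ = meval m ρ + eval l ρ := rfl

lemma eval_append (l₁ l₂ : List Mon) (ρ : ℝ) :
    eval (l₁ ++ l₂) ρ = eval l₁ ρ + eval l₂ ρ := by
  simp [eval]

lemma eval_stepA (t : ℝ) (l : List Mon) (ρ : ℝ) :
    eval (l.map (fun m => (m.1 / t, m.2.1 + 1, m.2.2))) ρ = ρ / t * eval l ρ := by
  induction l with
  | nil => simp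
  | cons m l ih =>
    simp only [List.map_cons, eval_cons, ih, meval, pow_succ]
    ring

lemma eval_stepB (l : List Mon) (ρ : ℝ) :
    eval (l.map (fun m => (-m.1, m.2.1, m.2.2))) ρ = -eval l ρ := by
  induction l with
  | nil => simp
  | cons m l ih =>
    simp only [List.map_cons, eval_cons, ih, meval]
    ring

lemma eval_stepC (c : ℝ) (l : List Mon) (ρ : ℝ) :
    eval (l.map (fun m => (c * m.1, m.2.1, m.2.2 + 1))) ρ
      = c * (Real.cosh ρ / Real.sinh ρ) * eval l ρ := by
  induction l with
  | nil => simp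
  | cons m l ih =>
    simp only [List.map_cons, eval_cons, ih, meval, pow_succ]
    ring

lemma eval_step (t : ℝ) (n : ℕ) (l : List Mon) (ρ : ℝ) :
    eval (step t n l) ρ
      = ρ / t * eval l ρ - eval (D l) ρ
        + (n : ℝ) * (Real.cosh ρ / Real.sinh ρ) * eval l ρ := by
  simp [step, eval_append, eval_stepA, eval_stepB, eval_stepC]
  ring

lemma eval_D_cons (m : Mon) (l : List Mon) (ρ : ℝ) :
    eval (D (m :: l)) ρ = eval (Dmon m) ρ + eval (D l) ρ := by
  simp [D, eval_append]

/-- The formal derivative evaluates to the real derivative. -/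
lemma hasDerivAt_meval (m : Mon) (ρ : ℝ) (h : Real.sinh ρ ≠ 0) :
    HasDerivAt (fun x => meval m x) (eval (Dmon m) ρ) ρ := by
  obtain ⟨c, a, b⟩ := m
  have hcoth : HasDerivAt (fun x => Real.cosh x / Real.sinh x)
      ((Real.sinh ρ * Real.sinh ρ - Real.cosh ρ * Real.cosh ρ) / Real.sinh ρ ^ 2) ρ :=
    (Real.hasDerivAt_cosh ρ).div (Real.hasDerivAt_sinh ρ) h
  have h1 : HasDerivAt (fun x => x ^ a) ((a : ℝ) * ρ ^ (a - 1)) ρ := hasDerivAt_pow a ρ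
  have h2 := hcoth.pow b
  have h3 := ((h1.mul h2).const_mul c)
  have heq : (fun x => meval (c, a, b) x) = fun x => c * (x ^ a * (Real.cosh x / Real.sinh x) ^ b) := by
    funext x; simp [meval]; ring
  rw [heq]
  refine h3.congr_deriv ?_
  symm
  have hs2 : Real.sinh ρ ^ 2 ≠ 0 := pow_ne_zero 2 h
  rcases b with _ | k
  · simp [Dmon, eval, meval]; ring
  · simp only [Dmon, eval, meval, List.map_cons, List.map_nil, List.sum_cons, List.sum_nil]
    push_cast
    have hc : (Real.cosh ρ / Real.sinh ρ) ^ 2 = (Real.cosh ρ * Real.cosh ρ) / Real.sinh ρ ^ 2 := by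
      field_simp
    have hkey : (Real.sinh ρ * Real.sinh ρ - Real.cosh ρ * Real.cosh ρ) / Real.sinh ρ ^ 2
        = 1 - (Real.cosh ρ / Real.sinh ρ) ^ 2 := by
      field_simp
    rw [hkey]
    try simp only [Nat.add_sub_cancel]
    simp only [Pi.pow_apply]; ring

lemma hasDerivAt_eval (l : List Mon) (ρ : ℝ) (h : Real.sinh ρ ≠ 0) :
    HasDerivAt (fun x => eval l x) (eval (D l) ρ) ρ := by
  induction l with
  | nil => simpa [eval, D] using (hasDerivAt_const ρ (0 : ℝ))
  | cons m l ih =>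
    have := (hasDerivAt_meval m ρ h).add ih
    rw [eval_D_cons]
    exact this

/-- the main structural identity for the iterates -/
lemma iter_eq (t : ℝ) (ht : 0 < t) (n : ℕ) :
    ∀ ρ > (0 : ℝ),
      (fun f : ℝ → ℝ => fun ρ : ℝ => -(deriv f ρ) / Real.sinh ρ)^[n]
          (fun ρ : ℝ => Real.exp (-ρ ^ 2 / (2 * t))) ρ
        = eval (q t n) ρ * Real.sinh ρ ^ (-(n : ℤ)) * Real.exp (-ρ ^ 2 / (2 * t)) := by
  induction n with
  | zero => intro ρ hρ; simp [q, eval, meval]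
  | succ n ih =>
    intro ρ hρ
    have hs : Real.sinh ρ ≠ 0 := ne_of_gt (Real.sinh_pos_iff.2 hρ)
    rw [Function.iterate_succ_apply']
    -- the iterate agrees with the closed form near ρ
    have hev : (fun f : ℝ → ℝ => fun ρ : ℝ => -(deriv f ρ) / Real.sinh ρ)^[n]
          (fun ρ : ℝ => Real.exp (-ρ ^ 2 / (2 * t)))
        =ᶠ[nhds ρ] fun x => eval (q t n) x * Real.sinh x ^ (-(n : ℤ)) * Real.exp (-x ^ 2 / (2 * t)) := by
      filter_upwards [isOpen_Ioi.mem_nhds (show ρ ∈ Set.Ioi (0:ℝ) from hρ)] with x hx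
      exact ih x hx
    have hD : HasDerivAt
        (fun x => eval (q t n) x * Real.sinh x ^ (-(n : ℤ)) * Real.exp (-x ^ 2 / (2 * t)))
        ((eval (D (q t n)) ρ * Real.sinh ρ ^ (-(n : ℤ))
            + eval (q t n) ρ * ((-(n : ℤ)) * Real.sinh ρ ^ (-(n : ℤ) - 1) * Real.cosh ρ))
          * Real.exp (-ρ ^ 2 / (2 * t))
          + eval (q t n) ρ * Real.sinh ρ ^ (-(n : ℤ))
            * (Real.exp (-ρ ^ 2 / (2 * t)) * (-(2 * ρ) / (2 * t)))) ρ := by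
      have hpow : HasDerivAt (fun x => Real.sinh x ^ (-(n : ℤ)))
          ((-(n : ℤ)) * Real.sinh ρ ^ (-(n : ℤ) - 1) * Real.cosh ρ) ρ := by
        have := (hasDerivAt_zpow (-(n : ℤ)) (Real.sinh ρ) (Or.inl hs)).comp ρ
          (Real.hasDerivAt_sinh ρ)
        simpa [Function.comp_def] using this
      have hexp : HasDerivAt (fun x => Real.exp (-x ^ 2 / (2 * t)))
          (Real.exp (-ρ ^ 2 / (2 * t)) * (-(2 * ρ) / (2 * t))) ρ := by
        have hinner : HasDerivAt (fun x : ℝ => -x ^ 2 / (2 * t)) (-(2 * ρ) / (2 * t)) ρ := by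
          have := ((hasDerivAt_pow 2 ρ).neg).div_const (2 * t)
          simpa using this
        simpa using hinner.exp
      exact ((hasDerivAt_eval (q t n) ρ hs).mul hpow).mul hexp
    rw [hev.deriv_eq, hD.deriv]
    have ht' : t ≠ 0 := ne_of_gt ht
    have hsn : Real.sinh ρ ^ n ≠ 0 := pow_ne_zero _ hs
    have e1 : Real.sinh ρ ^ (-(n : ℤ)) = (Real.sinh ρ ^ n)⁻¹ := by
      rw [zpow_neg, zpow_natCast]
    have e2 : Real.sinh ρ ^ (-(n : ℤ) - 1) = (Real.sinh ρ ^ n * Real.sinh ρ)⁻¹ := by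
      rw [show -(n : ℤ) - 1 = -((n + 1 : ℕ) : ℤ) by push_cast; ring, zpow_neg, zpow_natCast,
        pow_succ]
    have e3 : Real.sinh ρ ^ (-((n + 1 : ℕ) : ℤ)) = (Real.sinh ρ ^ n * Real.sinh ρ)⁻¹ := by
      rw [zpow_neg, zpow_natCast, pow_succ]
    rw [show q t (n + 1) = step t n (q t n) from rfl, eval_step, e1, e2, e3]
    field_simp
    push_cast
    ring

def degLe (k : ℕ) (l : List Mon) : Prop := ∀ m ∈ l, m.2.1 ≤ k

lemma degLe_D {k : ℕ} {l : List Mon} (h : degLe k l) : degLe k (D l) := by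
  intro m hm
  rw [D, List.mem_flatMap] at hm
  obtain ⟨m', hm', hmem⟩ := hm
  have hd := h m' hm'
  simp only [Dmon, List.mem_cons, List.mem_singleton, List.not_mem_nil, or_false] at hmem
  rcases hmem with rfl | rfl | rfl <;> simp <;> omega

lemma degLe_step {t : ℝ} {n k : ℕ} {l : List Mon} (h : degLe k l) :
    degLe (k + 1) (step t n l) := by
  intro m hm
  simp only [step, List.mem_append, List.mem_map] at hm
  rcases hm with (⟨m', hm', rfl⟩ | ⟨m', hm', rfl⟩) | ⟨m', hm', rfl⟩
  · have := h m' hm'; simpa using by omega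
  · have := degLe_D h m' hm'; simpa using by omega
  · have := h m' hm'; simpa using by omega

lemma degLe_q (t : ℝ) (n : ℕ) : degLe n (q t n) := by
  induction n with
  | zero => intro m hm; simp [q] at hm; simp [hm]
  | succ n ih => exact degLe_step ih

lemma coth_le {ρ : ℝ} (hρ : 1 ≤ ρ) :
    Real.cosh ρ / Real.sinh ρ ≤ Real.cosh 1 / Real.sinh 1 := by
  have hs1 : (0 : ℝ) < Real.sinh 1 := Real.sinh_pos_iff.2 one_pos
  have hsρ : (0 : ℝ) < Real.sinh ρ := Real.sinh_pos_iff.2 (lt_of_lt_of_le one_pos hρ)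
  rw [div_le_div_iff₀ hsρ hs1]
  have h0 : 0 ≤ Real.sinh (ρ - 1) := by rw [← Real.sinh_zero]; exact Real.sinh_le_sinh.2 (by linarith)
  rw [Real.sinh_sub] at h0
  linarith

lemma coth_nonneg {ρ : ℝ} (hρ : 1 ≤ ρ) : 0 ≤ Real.cosh ρ / Real.sinh ρ := by
  have hsρ : (0 : ℝ) < Real.sinh ρ := Real.sinh_pos_iff.2 (lt_of_lt_of_le one_pos hρ)
  positivity

lemma eval_bound (k : ℕ) (l : List Mon) (h : degLe k l) :
    ∃ C ≥ (0 : ℝ), ∀ ρ ≥ (1 : ℝ), |eval l ρ| ≤ C * ρ ^ k := by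
  induction l with
  | nil => exact ⟨0, le_refl _, fun ρ _ => by simp⟩
  | cons m l ih =>
    obtain ⟨C, hC0, hC⟩ := ih (fun m' hm' => h m' (List.mem_cons_of_mem _ hm'))
    have hK0 : (0 : ℝ) ≤ Real.cosh 1 / Real.sinh 1 := by
      have := Real.sinh_pos_iff.2 one_pos
      positivity
    refine ⟨|m.1| * (Real.cosh 1 / Real.sinh 1) ^ m.2.2 + C, by positivity, fun ρ hρ => ?_⟩
    have hρ0 : (0 : ℝ) < ρ := lt_of_lt_of_le one_pos hρ
    have hmon : |meval m ρ| ≤ |m.1| * (Real.cosh 1 / Real.sinh 1) ^ m.2.2 * ρ ^ k := by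
      have hma : m.2.1 ≤ k := h m List.mem_cons_self
      have h1 : |meval m ρ| = |m.1| * ρ ^ m.2.1 * (Real.cosh ρ / Real.sinh ρ) ^ m.2.2 := by
        rw [meval, abs_mul, abs_mul, abs_pow, abs_pow, abs_of_pos hρ0,
          abs_of_nonneg (coth_nonneg hρ)]
      rw [h1]
      have hp : ρ ^ m.2.1 ≤ ρ ^ k := pow_le_pow_right₀ hρ hma
      have hc : (Real.cosh ρ / Real.sinh ρ) ^ m.2.2
          ≤ (Real.cosh 1 / Real.sinh 1) ^ m.2.2 :=
        pow_le_pow_left₀ (coth_nonneg hρ) (coth_le hρ) _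
      have hcn : (0:ℝ) ≤ (Real.cosh ρ / Real.sinh ρ) ^ m.2.2 := pow_nonneg (coth_nonneg hρ) _
      calc |m.1| * ρ ^ m.2.1 * (Real.cosh ρ / Real.sinh ρ) ^ m.2.2
          ≤ |m.1| * ρ ^ k * (Real.cosh ρ / Real.sinh ρ) ^ m.2.2 := by
            apply mul_le_mul_of_nonneg_right _ hcn
            exact mul_le_mul_of_nonneg_left hp (abs_nonneg _)
        _ ≤ |m.1| * ρ ^ k * (Real.cosh 1 / Real.sinh 1) ^ m.2.2 := by
            apply mul_le_mul_of_nonneg_left hc; positivity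
        _ = |m.1| * (Real.cosh 1 / Real.sinh 1) ^ m.2.2 * ρ ^ k := by ring
    calc |eval (m :: l) ρ| ≤ |meval m ρ| + |eval l ρ| := by
          rw [eval_cons]; exact abs_add_le _ _
      _ ≤ |m.1| * (Real.cosh 1 / Real.sinh 1) ^ m.2.2 * ρ ^ k + C * ρ ^ k :=
          add_le_add hmon (hC ρ hρ)
      _ = (|m.1| * (Real.cosh 1 / Real.sinh 1) ^ m.2.2 + C) * ρ ^ k := by ring

lemma err_bound (t : ℝ) (ht : 0 < t) (n : ℕ) :
    ∃ C ≥ (0 : ℝ), ∀ ρ ≥ (1 : ℝ), |eval (q t n) ρ - (ρ / t) ^ n| ≤ C * ρ ^ n / ρ := by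
  induction n with
  | zero => exact ⟨0, le_refl _, fun ρ hρ => by simp [q, eval, meval]⟩
  | succ n ih =>
    obtain ⟨C, hC0, hC⟩ := ih
    obtain ⟨C1, hC10, hC1⟩ := eval_bound n _ (degLe_D (degLe_q t n))
    obtain ⟨C2, hC20, hC2⟩ := eval_bound n _ (degLe_q t n)
    set K := Real.cosh 1 / Real.sinh 1 with hK
    have hK0 : (0 : ℝ) ≤ K := by
      have := Real.sinh_pos_iff.2 one_pos
      positivity
    refine ⟨C / t + C1 + n * K * C2, by positivity, fun ρ hρ => ?_⟩
    have hρ0 : (0 : ℝ) < ρ := lt_of_lt_of_le one_pos hρ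
    have hdiv : ρ ^ (n + 1) / ρ = ρ ^ n := by
      rw [pow_succ, mul_div_assoc, div_self (ne_of_gt hρ0), mul_one]
    rw [mul_div_assoc, hdiv]
    have hrec : eval (q t (n + 1)) ρ - (ρ / t) ^ (n + 1)
        = ρ / t * (eval (q t n) ρ - (ρ / t) ^ n) - eval (D (q t n)) ρ
          + (n : ℝ) * (Real.cosh ρ / Real.sinh ρ) * eval (q t n) ρ := by
      rw [show q t (n + 1) = step t n (q t n) from rfl, eval_step, pow_succ]
      ring
    rw [hrec]
    have h1 : |ρ / t * (eval (q t n) ρ - (ρ / t) ^ n)| ≤ C / t * ρ ^ n := by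
      rw [abs_mul, abs_of_pos (div_pos hρ0 ht)]
      calc ρ / t * |eval (q t n) ρ - (ρ / t) ^ n| ≤ ρ / t * (C * ρ ^ n / ρ) := by
            apply mul_le_mul_of_nonneg_left (hC ρ hρ) (le_of_lt (div_pos hρ0 ht))
        _ = C / t * ρ ^ n := by field_simp
    have h3 : |(n : ℝ) * (Real.cosh ρ / Real.sinh ρ) * eval (q t n) ρ|
        ≤ (n : ℝ) * K * C2 * ρ ^ n := by
      rw [abs_mul, abs_mul, abs_of_nonneg (coth_nonneg hρ), Nat.abs_cast]
      calc (n : ℝ) * (Real.cosh ρ / Real.sinh ρ) * |eval (q t n) ρ|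
          ≤ (n : ℝ) * K * |eval (q t n) ρ| := by
            apply mul_le_mul_of_nonneg_right _ (abs_nonneg _)
            exact mul_le_mul_of_nonneg_left (coth_le hρ) (Nat.cast_nonneg n)
        _ ≤ (n : ℝ) * K * (C2 * ρ ^ n) := by
            apply mul_le_mul_of_nonneg_left (hC2 ρ hρ); positivity
        _ = (n : ℝ) * K * C2 * ρ ^ n := by ring
    calc |ρ / t * (eval (q t n) ρ - (ρ / t) ^ n) - eval (D (q t n)) ρ
          + (n : ℝ) * (Real.cosh ρ / Real.sinh ρ) * eval (q t n) ρ|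
        ≤ |ρ / t * (eval (q t n) ρ - (ρ / t) ^ n) - eval (D (q t n)) ρ|
          + |(n : ℝ) * (Real.cosh ρ / Real.sinh ρ) * eval (q t n) ρ| := abs_add_le _ _
      _ ≤ |ρ / t * (eval (q t n) ρ - (ρ / t) ^ n)| + |eval (D (q t n)) ρ|
          + |(n : ℝ) * (Real.cosh ρ / Real.sinh ρ) * eval (q t n) ρ| := by
            exact add_le_add_left (abs_sub _ _) _
      _ ≤ C / t * ρ ^ n + C1 * ρ ^ n + (n : ℝ) * K * C2 * ρ ^ n :=
          add_le_add (add_le_add h1 (hC1 ρ hρ)) h3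
      _ = (C / t + C1 + n * K * C2) * ρ ^ n := by ring

end IterSinhAux
end

open IterSinhAux in
/-- For `L f = -f'/sinh` and `F_t(ρ) = exp(-ρ²/(2t))`:
`Lⁿ F_t (ρ) = (ρ/(t sinh ρ))ⁿ (1 + O(1/ρ)) exp(-ρ²/(2t))` as `ρ → ∞`. -/
theorem iterated_sinh_deriv_gaussian_asymptotics (n : ℕ) (t : ℝ) (ht : 0 < t) :
    ∃ C > (0 : ℝ), ∃ R > (0 : ℝ), ∀ ρ ≥ R,
      |(fun f : ℝ → ℝ => fun ρ : ℝ => -(deriv f ρ) / Real.sinh ρ)^[n]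
            (fun ρ : ℝ => Real.exp (-ρ ^ 2 / (2 * t))) ρ
          * (t * Real.sinh ρ / ρ) ^ n * Real.exp (ρ ^ 2 / (2 * t)) - 1| ≤ C / ρ := by
  obtain ⟨C, hC0, hC⟩ := err_bound t ht n
  refine ⟨C * t ^ n + 1, by positivity, 1, one_pos, fun ρ hρ => ?_⟩
  have hρ0 : (0 : ℝ) < ρ := lt_of_lt_of_le one_pos hρ
  have hs : (0 : ℝ) < Real.sinh ρ := Real.sinh_pos_iff.2 hρ0
  have ht' : t ≠ 0 := ne_of_gt ht
  rw [iter_eq t ht n ρ hρ0]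
  have h1 : (t * Real.sinh ρ / ρ) ^ n = t ^ n * Real.sinh ρ ^ n / ρ ^ n := by
    rw [div_pow, mul_pow]
  rw [h1, zpow_neg, zpow_natCast]
  have he : Real.exp (-ρ ^ 2 / (2 * t)) * Real.exp (ρ ^ 2 / (2 * t)) = 1 := by
    rw [← Real.exp_add, show -ρ ^ 2 / (2 * t) + ρ ^ 2 / (2 * t) = 0 by ring, Real.exp_zero]
  have h2 : eval (q t n) ρ * (Real.sinh ρ ^ n)⁻¹ * Real.exp (-ρ ^ 2 / (2 * t))
        * (t ^ n * Real.sinh ρ ^ n / ρ ^ n) * Real.exp (ρ ^ 2 / (2 * t))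
      = eval (q t n) ρ * t ^ n / ρ ^ n
        * (Real.exp (-ρ ^ 2 / (2 * t)) * Real.exp (ρ ^ 2 / (2 * t))) := by
    field_simp
    try ring
  rw [h2, he, mul_one]
  have h3 : eval (q t n) ρ * t ^ n / ρ ^ n - 1
      = (eval (q t n) ρ - (ρ / t) ^ n) * (t ^ n / ρ ^ n) := by
    field_simp
    have : t⁻¹ ^ n * t ^ n = 1 := by rw [← mul_pow, inv_mul_cancel₀ ht', one_pow]
    linear_combination ρ ^ n * this
  rw [h3, abs_mul, abs_of_pos (show (0 : ℝ) < t ^ n / ρ ^ n by positivity)]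
  calc |eval (q t n) ρ - (ρ / t) ^ n| * (t ^ n / ρ ^ n)
      ≤ C * ρ ^ n / ρ * (t ^ n / ρ ^ n) :=
        mul_le_mul_of_nonneg_right (hC ρ hρ) (by positivity)
    _ = C * t ^ n / ρ := by field_simp; try ring
    _ ≤ (C * t ^ n + 1) / ρ := by gcongr; linarith
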